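/- For every nonnegative integer l and every λ ∈ ℂ, the function z ↦ |z|^{2l} · e^{πλz − π|z|²} is integrable over ℂ and ∫_ℂ |z|^{2l} e^{πλz − π|z|²} dz = l! / π^l. -/

import Mathlib

open MeasureTheory Real Set

private lemma aux_pow_le_exp {u : ℝ} (hu : 0 ≤ u) (l : ℕ) :
    u ^ l ≤ l.factorial * Real.exp u := by
  have h1 : u ^ l / l.factorial ≤ Real.exp u := by
    refine le_trans ?_ (Real.sum_le_exp_of_nonneg hu (l + 1))
    exact Finset.single_le_sum (f := fun i => u ^ i / i.factorial)
      (fun i _ => by positivity) (Finset.self_mem_range_succ l)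
  have hl : (0:ℝ) < l.factorial := by positivity
  calc u ^ l = (u ^ l / l.factorial) * l.factorial := by field_simp
  _ ≤ Real.exp u * l.factorial := by gcongr
  _ = l.factorial * Real.exp u := mul_comm _ _

private lemma gauss_integrable {b : ℝ} (hb : 0 < b) :
    Integrable (fun v : ℂ => Real.exp (-b * ‖v‖^2)) := by
  have h0 := GaussianFourier.integrable_cexp_neg_mul_sq_norm_add (V := ℂ) (b := (b:ℂ))
    (by simpa using hb) 0 0
  simp only [zero_mul, add_zero] at h0
  refine h0.norm.congr (Filter.Eventually.of_forall fun v => ?_)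
  simp only []
  rw [Complex.norm_exp]
  congr 1
  have : (-(b:ℂ) * (‖v‖:ℂ)^2) = ((-b * ‖v‖^2 : ℝ) : ℂ) := by push_cast; ring
  rw [this, Complex.ofReal_re]

private lemma f_norm_le (l : ℕ) (lam : ℂ) (z : ℂ) :
    ‖(‖z‖ : ℂ) ^ (2*l) * Complex.exp ((π:ℂ)*lam*z - (π:ℂ)*(‖z‖:ℂ)^2)‖
      ≤ ((l.factorial : ℝ) * (4/π)^l * Real.exp (π * (‖lam‖)^2/2))
        * Real.exp (-(π/4) * ‖z‖^2) := by
  set r := ‖z‖ with hr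
  set c := ‖lam‖ with hc
  have hr0 : 0 ≤ r := norm_nonneg z
  have hre : ((π:ℂ)*lam*z - (π:ℂ)*(r:ℂ)^2).re = π*(lam*z).re - π*r^2 := by
    have h1 : (π:ℂ)*lam*z - (π:ℂ)*(r:ℂ)^2 = (π:ℂ) * (lam*z) - ((π*r^2 : ℝ) : ℂ) := by
      push_cast; ring
    rw [h1, Complex.sub_re, Complex.re_ofReal_mul, Complex.ofReal_re]
  have hnorm : ‖(r:ℂ) ^ (2*l) * Complex.exp ((π:ℂ)*lam*z - (π:ℂ)*(r:ℂ)^2)‖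
      = r ^ (2*l) * Real.exp (π*(lam*z).re - π*r^2) := by
    rw [norm_mul, norm_pow, Complex.norm_exp, hre,
      Complex.norm_real, Real.norm_eq_abs, abs_of_nonneg hr0]
  rw [hnorm]
  have hb1 : r ^ (2*l) ≤ (4/π)^l * ((l.factorial : ℝ) * Real.exp (π/4*r^2)) := by
    have hu : (0:ℝ) ≤ π/4*r^2 := by positivity
    calc r^(2*l) = (4/π)^l * (π/4*r^2)^l := by
          rw [pow_mul, ← mul_pow]
          congr 1
          field_simp
    _ ≤ (4/π)^l * ((l.factorial : ℝ) * Real.exp (π/4*r^2)) := by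
          have := aux_pow_le_exp hu l
          gcongr
  have hb2 : Real.exp (π*(lam*z).re - π*r^2) ≤ Real.exp (π*c^2/2 - π/2*r^2) := by
    apply Real.exp_le_exp.mpr
    have h1 : (lam*z).re ≤ c * r := by
      calc (lam*z).re ≤ ‖lam*z‖ := Complex.re_le_norm _
      _ = c * r := by rw [norm_mul]
    nlinarith [sq_nonneg (c - r), Real.pi_pos, mul_le_mul_of_nonneg_left h1 Real.pi_pos.le]
  calc r ^ (2*l) * Real.exp (π*(lam*z).re - π*r^2)
      ≤ ((4/π)^l * ((l.factorial : ℝ) * Real.exp (π/4*r^2)))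
        * Real.exp (π*c^2/2 - π/2*r^2) := by
        apply mul_le_mul hb1 hb2 (Real.exp_pos _).le (by positivity)
  _ = ((l.factorial : ℝ) * (4/π)^l * Real.exp (π * c^2/2)) * Real.exp (-(π/4) * r^2) := by
        rw [mul_assoc, mul_assoc, ← Real.exp_add, show π/4*r^2 + (π*c^2/2 - π/2*r^2)
          = π*c^2/2 + (-(π/4)*r^2) by ring, Real.exp_add]
        ring
  _ = ((l.factorial : ℝ) * (4/π)^l * Real.exp (π * c^2/2)) * Real.exp (-(π/4) * ‖z‖^2) := by
        rfl

private lemma f_integrable (l : ℕ) (lam : ℂ) :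
    Integrable (fun z : ℂ =>
      (‖z‖ : ℂ) ^ (2 * l) * Complex.exp ((Real.pi : ℂ) * lam * z
        - (Real.pi : ℂ) * (‖z‖ : ℂ) ^ 2)) := by
  refine Integrable.mono' ((gauss_integrable (b := π/4) (by positivity)).const_mul
    ((l.factorial : ℝ) * (4/π)^l * Real.exp (π * (‖lam‖)^2/2)))
    ?_ (Filter.Eventually.of_forall (f_norm_le l lam))
  apply Continuous.aestronglyMeasurable
  have habs : Continuous fun z : ℂ => ((‖z‖ : ℝ) : ℂ) :=
    Complex.continuous_ofReal.comp continuous_norm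
  exact (habs.pow _).mul (Complex.continuous_exp.comp
    ((continuous_const.mul continuous_id).sub
      (continuous_const.mul (habs.pow 2))))

private lemma circle_avg (a : ℂ) :
    (∫ θ in Ioo (-π) π, Complex.exp (a * Complex.exp (θ * Complex.I))) = 2 * π := by
  have hd : DifferentiableOn ℂ (fun z => Complex.exp (a * z)) (Metric.closedBall 0 1) :=
    (Complex.differentiable_exp.comp (differentiable_id.const_mul a)).differentiableOn
  have hw : (0:ℂ) ∈ Metric.ball (0:ℂ) 1 := by simp
  have h := hd.circleIntegral_sub_inv_smul hw
  rw [circleIntegral] at h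
  simp only [deriv_circleMap, circleMap, Complex.ofReal_one, Complex.ofReal_zero, zero_add,
    one_mul, sub_zero, smul_eq_mul, mul_zero, Complex.exp_zero, mul_one] at h
  have h2 : ∀ θ : ℝ, Complex.exp (θ * Complex.I) * Complex.I *
      ((Complex.exp (θ * Complex.I))⁻¹ * Complex.exp (a * Complex.exp (θ * Complex.I)))
      = Complex.I * Complex.exp (a * Complex.exp (θ * Complex.I)) := by
    intro θ
    have hne : Complex.exp (θ * Complex.I) ≠ 0 := Complex.exp_ne_zero _
    field_simp
  simp only [h2] at h
  rw [intervalIntegral.integral_const_mul] at h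
  have h3 : (∫ θ in (0:ℝ)..(2*π), Complex.exp (a * Complex.exp (θ * Complex.I))) = 2 * π :=
    mul_left_cancel₀ Complex.I_ne_zero (h.trans (by ring))
  have hper : Function.Periodic (fun θ : ℝ => Complex.exp (a * Complex.exp (θ * Complex.I)))
      (2 * π) := by
    intro θ
    simp only
    congr 2
    push_cast
    rw [add_mul, Complex.exp_add, Complex.exp_two_pi_mul_I, mul_one]
  have h4 : (∫ θ in (-π)..π, Complex.exp (a * Complex.exp (θ * Complex.I))) = 2 * π := by
    have := hper.intervalIntegral_add_eq (-π) 0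
    simp only [zero_add] at this
    rw [show -π + 2 * π = π by ring] at this
    rw [this, h3]
  rw [← h4, intervalIntegral.integral_of_le (by linarith [Real.pi_pos]),
    ← MeasureTheory.integral_Ioc_eq_integral_Ioo]

private lemma integral_ofReal' {f : ℝ → ℝ} {μ : Measure ℝ} :
    ∫ x, ((f x : ℝ) : ℂ) ∂μ = ((∫ x, f x ∂μ : ℝ) : ℂ) := integral_ofReal

private lemma radial_integral (l : ℕ) :
    ∫ r in Ioi (0:ℝ), r^(2*l+1) * Real.exp (-π * r^2)
      = (π^(l+1))⁻¹ * (l.factorial : ℝ) / 2 := by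
  have h := integral_rpow_mul_exp_neg_mul_rpow (p := 2) (q := ((2*l+1 : ℕ):ℝ)) (b := π)
    two_pos (lt_of_lt_of_le (by norm_num) (Nat.cast_nonneg _)) Real.pi_pos
  have hLHS : (∫ x in Ioi (0:ℝ), x ^ ((2*l+1 : ℕ):ℝ) * Real.exp (-π * x ^ (2:ℝ)))
      = ∫ r in Ioi (0:ℝ), r^(2*l+1) * Real.exp (-π * r^2) := by
    refine setIntegral_congr_fun measurableSet_Ioi fun x hx => ?_
    rw [Real.rpow_natCast, show (2:ℝ) = ((2:ℕ):ℝ) by norm_num, Real.rpow_natCast]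
  rw [← hLHS, h]
  have e1 : (((2*l+1:ℕ):ℝ)+1)/2 = (l:ℝ)+1 := by push_cast; ring
  have e2 : -(((2*l+1:ℕ):ℝ)+1)/2 = -(((l+1:ℕ)):ℝ) := by push_cast; ring
  rw [e1, e2, Real.Gamma_nat_eq_factorial, Real.rpow_neg Real.pi_pos.le, Real.rpow_natCast]
  ring

theorem stmt_3 (l : ℕ) (lam : ℂ) :
    Integrable (fun z : ℂ =>
      (‖z‖ : ℂ) ^ (2 * l) * Complex.exp ((Real.pi : ℂ) * lam * z
        - (Real.pi : ℂ) * (‖z‖ : ℂ) ^ 2)) ∧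
    ∫ z : ℂ, (‖z‖ : ℂ) ^ (2 * l) *
        Complex.exp ((Real.pi : ℂ) * lam * z - (Real.pi : ℂ) * (‖z‖ : ℂ) ^ 2)
      = (l.factorial : ℂ) / (Real.pi : ℂ) ^ l := by
  refine ⟨f_integrable l lam, ?_⟩
  set H : ℝ × ℝ → ℂ := fun p =>
    ((p.1:ℂ)^(2*l+1) * Complex.exp (-(π:ℂ) * (p.1:ℂ)^2))
      * Complex.exp (((π:ℂ)*lam*(p.1:ℂ)) * Complex.exp ((p.2:ℂ) * Complex.I)) with hH
  have hHf : ∀ p : ℝ × ℝ, H p = p.1 •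
      ((‖Complex.polarCoord.symm p‖ : ℂ) ^ (2 * l) *
        Complex.exp ((π:ℂ) * lam * (Complex.polarCoord.symm p)
          - (π:ℂ) * (‖Complex.polarCoord.symm p‖ : ℂ) ^ 2)) := by
    intro p
    have h1 : ‖Complex.polarCoord.symm p‖ = |p.1| :=
      Complex.norm_polarCoord_symm p
    have h2 : Complex.polarCoord.symm p = (p.1:ℂ) * Complex.exp ((p.2:ℂ) * Complex.I) := by
      rw [Complex.polarCoord_symm_apply, Complex.exp_mul_I, ← Complex.ofReal_cos,
        ← Complex.ofReal_sin]
    rw [h1, h2, Complex.real_smul]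
    have h3 : ((|p.1| : ℝ) : ℂ)^(2*l) = ((p.1 : ℝ) : ℂ)^(2*l) := by
      rw [← Complex.ofReal_pow, ← Complex.ofReal_pow, (even_two_mul l).pow_abs]
    have h4 : ((|p.1| : ℝ) : ℂ)^2 = ((p.1 : ℝ) : ℂ)^2 := by
      rw [← Complex.ofReal_pow, ← Complex.ofReal_pow, sq_abs]
    rw [h3, h4, show (π:ℂ)*lam*((p.1:ℂ) * Complex.exp ((p.2:ℂ)*Complex.I)) - (π:ℂ)*(p.1:ℂ)^2
      = -(π:ℂ)*(p.1:ℂ)^2 + ((π:ℂ)*lam*(p.1:ℂ))*Complex.exp ((p.2:ℂ)*Complex.I) by ring,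
      Complex.exp_add]
    ring
  have hHcont : Continuous H := by
    have c1 : Continuous fun p : ℝ × ℝ => (p.1 : ℂ) :=
      Complex.continuous_ofReal.comp continuous_fst
    have c2 : Continuous fun p : ℝ × ℝ => (p.2 : ℂ) :=
      Complex.continuous_ofReal.comp continuous_snd
    exact ((c1.pow _).mul (Complex.continuous_exp.comp
        (continuous_const.mul (c1.pow 2)))).mul
      (Complex.continuous_exp.comp (((continuous_const.mul c1)).mul
        (Complex.continuous_exp.comp (c2.mul continuous_const))))
  have hHint : IntegrableOn H (Ioi (0:ℝ) ×ˢ Ioo (-π) π) (volume.prod volume) := by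
    rw [IntegrableOn, ← Measure.prod_restrict]
    set C1 := ((l.factorial : ℝ) * (4/π)^l * Real.exp (π * (‖lam‖)^2/2)) with hC1
    have hC1pos : 0 < C1 := by positivity
    haveI : IsFiniteMeasure (volume.restrict (Ioo (-π) π)) :=
      ⟨by rw [Measure.restrict_apply_univ]; exact measure_Ioo_lt_top⟩
    have hmaj : Integrable (fun p : ℝ × ℝ => ((1 + 8/π) * C1 * Real.exp (-(π/8) * p.1^2)) * 1)
        ((volume.restrict (Ioi 0)).prod (volume.restrict (Ioo (-π) π))) :=
      Integrable.mul_prod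
        (((integrable_exp_neg_mul_sq (by positivity : (0:ℝ) < π/8)).const_mul
          ((1 + 8/π) * C1)).restrict) (integrable_const 1)
    refine Integrable.mono' hmaj hHcont.aestronglyMeasurable
      (Filter.Eventually.of_forall fun p => ?_)
    have hb := f_norm_le l lam (Complex.polarCoord.symm p)
    have hnp : ‖Complex.polarCoord.symm p‖ = |p.1| := by
      rw [Complex.norm_polarCoord_symm]
    rw [hnp] at hb
    calc ‖H p‖ = |p.1| * ‖(‖Complex.polarCoord.symm p‖ : ℂ) ^ (2 * l) *
          Complex.exp ((π:ℂ) * lam * (Complex.polarCoord.symm p)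
            - (π:ℂ) * (‖Complex.polarCoord.symm p‖ : ℂ) ^ 2)‖ := by
          rw [hHf p, norm_smul, Real.norm_eq_abs]
    _ ≤ |p.1| * (C1 * Real.exp (-(π/4) * |p.1|^2)) := by
          rw [hnp]
          apply mul_le_mul_of_nonneg_left hb (abs_nonneg _)
    _ ≤ ((1 + 8/π) * Real.exp ((π/8) * p.1^2)) * (C1 * Real.exp (-(π/4) * p.1^2)) := by
          rw [sq_abs]
          apply mul_le_mul_of_nonneg_right _ (by positivity)
          have h1 : |p.1| ≤ 1 + p.1^2 := by
            nlinarith [sq_nonneg (|p.1| - 1), abs_nonneg p.1, sq_abs p.1]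
          have h2 : p.1^2 ≤ (8/π) * Real.exp ((π/8) * p.1^2) := by
            have := aux_pow_le_exp (u := (π/8) * p.1^2) (by positivity) 1
            simp only [pow_one, Nat.factorial_one, Nat.cast_one, one_mul] at this
            calc p.1^2 = (8/π) * ((π/8) * p.1^2) := by field_simp
            _ ≤ (8/π) * Real.exp ((π/8) * p.1^2) := by gcongr
          have h3 : (1:ℝ) ≤ Real.exp ((π/8) * p.1^2) :=
            Real.one_le_exp (by positivity)
          calc |p.1| ≤ 1 + p.1^2 := h1
          _ ≤ 1 * Real.exp ((π/8) * p.1^2) + (8/π) * Real.exp ((π/8) * p.1^2) := by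
              apply add_le_add
              · simpa using h3
              · exact h2
          _ = (1 + 8/π) * Real.exp ((π/8) * p.1^2) := by ring
    _ = ((1 + 8/π) * C1 * Real.exp (-(π/8) * p.1^2)) * 1 := by
          rw [mul_one]
          rw [show ((1 + 8/π) * Real.exp ((π/8) * p.1^2)) * (C1 * Real.exp (-(π/4) * p.1^2))
            = (1 + 8/π) * C1 * (Real.exp ((π/8) * p.1^2) * Real.exp (-(π/4) * p.1^2)) by ring,
            ← Real.exp_add]
          congr 2
          ring
  calc ∫ z : ℂ, (‖z‖ : ℂ) ^ (2 * l) *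
        Complex.exp ((π : ℂ) * lam * z - (π : ℂ) * (‖z‖ : ℂ) ^ 2)
      = ∫ p in Ioi (0:ℝ) ×ˢ Ioo (-π) π, p.1 •
          ((‖Complex.polarCoord.symm p‖ : ℂ) ^ (2 * l) *
            Complex.exp ((π:ℂ) * lam * (Complex.polarCoord.symm p)
              - (π:ℂ) * (‖Complex.polarCoord.symm p‖ : ℂ) ^ 2)) := by
        rw [← Complex.integral_comp_polarCoord_symm, polarCoord_target]
  _ = ∫ p in Ioi (0:ℝ) ×ˢ Ioo (-π) π, H p :=
        setIntegral_congr_fun (measurableSet_Ioi.prod measurableSet_Ioo)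
          (fun p _ => (hHf p).symm)
  _ = ∫ r in Ioi (0:ℝ), ∫ θ in Ioo (-π) π, H (r, θ) := by
        rw [Measure.volume_eq_prod]
        exact setIntegral_prod H hHint
  _ = ∫ r in Ioi (0:ℝ), ((r:ℂ)^(2*l+1) * Complex.exp (-(π:ℂ)*(r:ℂ)^2)) * (2*(π:ℂ)) := by
        refine setIntegral_congr_fun measurableSet_Ioi fun r hr => ?_
        simp only [hH]
        rw [MeasureTheory.integral_const_mul, circle_avg ((π:ℂ)*lam*(r:ℂ))]
  _ = ((∫ r in Ioi (0:ℝ), r^(2*l+1) * Real.exp (-π*r^2) * (2*π) : ℝ) : ℂ) := by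
        refine Eq.trans ?_
          (integral_ofReal' (f := fun r => r^(2*l+1) * Real.exp (-π*r^2) * (2*π)))
        refine setIntegral_congr_fun measurableSet_Ioi fun r hr => ?_
        push_cast
        ring
  _ = (l.factorial : ℂ) / (π : ℂ) ^ l := by
        rw [integral_mul_const, radial_integral]
        have hπ : (π:ℝ) ≠ 0 := Real.pi_ne_zero
        have : ((π:ℝ)^(l+1))⁻¹ * (l.factorial : ℝ)/2 * (2*π) = (l.factorial : ℝ) / π^l := by
          rw [pow_succ]
          field_simp
        rw [this]
        push_cast
        ring
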